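/- Let f̄_n, ḡ_n : Θ → ℝ be differentiable with ḡ_n ≥ f̄_n − ε̄_n, and suppose both ∇f̄_n and ∇ḡ_n are L-Lipschitz on ℝ^p. Then for all θ_n ∈ Θ and all unit-direction parameters, ‖∇ḡ_n(θ_n) − ∇f̄_n(θ_n)‖² ≤ sup over ε>0 of [(ḡ_n(θ_n) + ε̄_n − f̄_n(θ_n))/(ε − Lε²)]; in particular, taking ε = 1/(2L), ‖∇ḡ_n(θ_n) − ∇f̄_n(θ_n)‖² ≤ 4L·(ḡ_n(θ_n) + ε̄_n − f̄_n(θ_n)). -/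

import Mathlib

open intervalIntegral RealInnerProductSpace

/-- Descent lemma: if `f` has `L`-Lipschitz gradient `f'`, then
`|f (x + v) - f x - ⟪f' x, v⟫| ≤ L/2 * ‖v‖²`. -/
lemma descent_lemma {E : Type*} [NormedAddCommGroup E] [InnerProductSpace ℝ E]
    [CompleteSpace E] (f : E → ℝ) (f' : E → E) (L : ℝ) (hL : 0 ≤ L)
    (hf : ∀ x, HasGradientAt f (f' x) x)
    (hf' : ∀ x y, ‖f' x - f' y‖ ≤ L * ‖x - y‖) (x v : E) :
    |f (x + v) - f x - ⟪f' x, v⟫| ≤ L / 2 * ‖v‖ ^ 2 := by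
  have hcont : Continuous f' := by
    have : LipschitzWith (Real.toNNReal L) f' := by
      apply LipschitzWith.of_dist_le_mul
      intro a b
      rw [dist_eq_norm, dist_eq_norm, Real.coe_toNNReal L hL]
      exact hf' a b
    exact this.continuous
  have hcurve : ∀ t : ℝ, HasDerivAt (fun t : ℝ => x + t • v) v t := by
    intro t
    simpa using ((hasDerivAt_id t).smul_const v).const_add x
  have hφ : ∀ t : ℝ, HasDerivAt (fun t : ℝ => f (x + t • v))
      (⟪f' (x + t • v), v⟫) t := by
    intro t
    have := (hf (x + t • v)).hasFDerivAt.comp_hasDerivAt t (hcurve t)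
    simp at this
    exact this
  have hψcont : Continuous (fun t : ℝ => ⟪f' (x + t • v), v⟫) := by
    exact (hcont.comp (by continuity)).inner continuous_const
  have hint : IntervalIntegrable (fun t : ℝ => ⟪f' (x + t • v), v⟫)
      MeasureTheory.volume 0 1 := hψcont.intervalIntegrable 0 1
  have hFTC : ∫ t in (0:ℝ)..1, ⟪f' (x + t • v), v⟫
      = f (x + v) - f x := by
    have := intervalIntegral.integral_eq_sub_of_hasDerivAt
      (f := fun t : ℝ => f (x + t • v))
      (f' := fun t : ℝ => ⟪f' (x + t • v), v⟫)
      (fun t _ => hφ t) hint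
    simpa using this
  have hsplit : f (x + v) - f x - ⟪f' x, v⟫
      = ∫ t in (0:ℝ)..1, ⟪f' (x + t • v) - f' x, v⟫ := by
    rw [← hFTC]
    have : ∀ t : ℝ, ⟪f' (x + t • v) - f' x, v⟫
        = ⟪f' (x + t • v), v⟫ - ⟪f' x, v⟫ := fun t => inner_sub_left _ _ _
    simp only [this]
    rw [intervalIntegral.integral_sub hint
      (intervalIntegrable_const)]
    simp
  rw [hsplit]
  have hbound : ∀ t ∈ Set.Icc (0:ℝ) 1,
      ‖⟪f' (x + t • v) - f' x, v⟫‖ ≤ L * ‖v‖ ^ 2 * t := by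
    intro t ht
    calc ‖⟪f' (x + t • v) - f' x, v⟫‖
        ≤ ‖f' (x + t • v) - f' x‖ * ‖v‖ := norm_inner_le_norm _ _
      _ ≤ (L * ‖x + t • v - x‖) * ‖v‖ := by
          gcongr; exact hf' _ _
      _ = L * ‖v‖ ^ 2 * t := by
          rw [add_sub_cancel_left, norm_smul, Real.norm_eq_abs,
            abs_of_nonneg ht.1]
          ring
  have habs : |∫ t in (0:ℝ)..1, ⟪f' (x + t • v) - f' x, v⟫|
      ≤ ∫ t in (0:ℝ)..1, L * ‖v‖ ^ 2 * t := by
    apply intervalIntegral.abs_integral_le_integral_abs (by norm_num) |>.trans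
    apply intervalIntegral.integral_mono_on (by norm_num)
    · exact (((hcont.comp (by continuity)).sub continuous_const).inner
        continuous_const).abs.intervalIntegrable 0 1
    · exact (Continuous.intervalIntegrable (by continuity) 0 1)
    · intro t ht
      simpa [Real.norm_eq_abs] using hbound t ht
  calc |∫ t in (0:ℝ)..1, ⟪f' (x + t • v) - f' x, v⟫|
      ≤ ∫ t in (0:ℝ)..1, L * ‖v‖ ^ 2 * t := habs
    _ = L / 2 * ‖v‖ ^ 2 := by
        rw [intervalIntegral.integral_const_mul, integral_id]
        ring

theorem stmt16 (p : ℕ) (f g : EuclideanSpace ℝ (Fin p) → ℝ)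
    (f' g' : EuclideanSpace ℝ (Fin p) → EuclideanSpace ℝ (Fin p))
    (L εbar : ℝ) (hL : 0 < L) (hεbar : 0 ≤ εbar)
    (hf : ∀ x, HasGradientAt f (f' x) x) (hg : ∀ x, HasGradientAt g (g' x) x)
    (hf' : ∀ x y, ‖f' x - f' y‖ ≤ L * ‖x - y‖)
    (hg' : ∀ x y, ‖g' x - g' y‖ ≤ L * ‖x - y‖)
    (hmaj : ∀ θ, f θ ≤ g θ + εbar) (θn : EuclideanSpace ℝ (Fin p)) :
    (∀ ε : ℝ, 0 < ε →
      (ε - L * ε ^ 2) * ‖g' θn - f' θn‖ ^ 2 ≤ g θn + εbar - f θn) ∧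
    ‖g' θn - f' θn‖ ^ 2 ≤ 4 * L * (g θn + εbar - f θn) := by
  have key : ∀ ε : ℝ, 0 < ε →
      (ε - L * ε ^ 2) * ‖g' θn - f' θn‖ ^ 2 ≤ g θn + εbar - f θn := by
    intro ε hε
    set w : EuclideanSpace ℝ (Fin p) := ε • (f' θn - g' θn) with hw
    have hdf := descent_lemma f f' L hL.le hf hf' θn w
    have hdg := descent_lemma g g' L hL.le hg hg' θn w
    have hm := hmaj (θn + w)
    have h1 : f θn + ⟪f' θn, w⟫ - L / 2 * ‖w‖ ^ 2 ≤ f (θn + w) := by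
      have := abs_le.mp hdf
      linarith [this.1]
    have h2 : g (θn + w) ≤ g θn + ⟪g' θn, w⟫ + L / 2 * ‖w‖ ^ 2 := by
      have := abs_le.mp hdg
      linarith [this.2]
    have hiner : ⟪f' θn, w⟫ - ⟪g' θn, w⟫ = ε * ‖g' θn - f' θn‖ ^ 2 := by
      rw [hw, inner_smul_right, inner_smul_right, ← mul_sub,
        ← inner_sub_left]
      rw [show f' θn - g' θn = -(g' θn - f' θn) by abel]
      rw [inner_neg_left, inner_neg_right, neg_neg, real_inner_self_eq_norm_sq]
    have hnw : ‖w‖ ^ 2 = ε ^ 2 * ‖g' θn - f' θn‖ ^ 2 := by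
      rw [hw, norm_smul, Real.norm_eq_abs, abs_of_pos hε, mul_pow]
      congr 1
      rw [← norm_neg]; congr 1; abel
    nlinarith [h1, h2, hm, hiner, hnw]
  refine ⟨key, ?_⟩
  have h := key (1 / (2 * L)) (by positivity)
  have hLne : L ≠ 0 := hL.ne'
  have : (1 / (2 * L) - L * (1 / (2 * L)) ^ 2) = 1 / (4 * L) := by
    field_simp; ring
  rw [this] at h
  have h4L : (0:ℝ) < 4 * L := by linarith
  calc ‖g' θn - f' θn‖ ^ 2 = (4 * L) * (1 / (4 * L) * ‖g' θn - f' θn‖ ^ 2) := by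
        field_simp
    _ ≤ 4 * L * (g θn + εbar - f θn) := by
        apply mul_le_mul_of_nonneg_left h h4L.le
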